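/- Under the hypotheses of the propagator difference formula, assume additionally a_1 := sup_{t≤r} max(‖U_1^{t,r}‖_{B→B}, ‖U_2^{t,r}‖_{B→B}) < ∞ and a_2 := sup_{t≤r} ‖U_1^{t,r}‖_{D→D} < ∞. Then for all t ≤ r: ‖U_2^{t,r} - U_1^{t,r}‖_{D→B} ≤ a_1 a_2 (r-t) sup_{t≤s≤r} ‖L^2_s - L^1_s‖_{D→B}. -/

import Mathlib

open Filter Asymptotics Set Topology

/-- **Norm estimate for the difference of two propagators** (Proposition 2.1, (2.3)).
Under the hypotheses of the propagator difference formula, with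
`a₁ ≥ ‖U i t r‖_{B→B}` for all `t ≤ r` and `a₂ ≥ ‖U 0 t r‖_{D→D}`, one has
`‖U 1 t r (j f) - U 0 t r (j f)‖ ≤ a₁ a₂ (r - t) sup_{t≤s≤r} ‖L 1 s - L 0 s‖ ‖f‖_D`. -/
theorem propagator_difference_estimate
    {B D : Type*} [NormedAddCommGroup B] [NormedSpace ℝ B] [CompleteSpace B]
    [NormedAddCommGroup D] [NormedSpace ℝ D] [CompleteSpace D]
    (j : D →L[ℝ] B)
    (U : Fin 2 → ℝ → ℝ → (B →L[ℝ] B))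
    (L : Fin 2 → ℝ → (D →L[ℝ] B))
    (V : ℝ → ℝ → (D →L[ℝ] D))
    (hUid : ∀ i t, U i t t = ContinuousLinearMap.id ℝ B)
    (hUchain : ∀ i t s r, t ≤ s → s ≤ r → (U i t s).comp (U i s r) = U i t r)
    (hLcont : ∀ i (f : D), Continuous fun s => L i s f)
    (hV : ∀ s r (f : D), j (V s r f) = U 0 s r (j f))
    (hgen_fwd : ∀ i t r (f : D), ∀ s ∈ Set.Icc t r,
      HasDerivAt (fun σ => U i t σ (j f)) (U i t s (L i s f)) s)
    (hgen_bwd : ∀ t r (f : D), ∀ s ∈ Set.Icc t r,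
      HasDerivAt (fun σ => U 0 σ r (j f)) (-(L 0 s (V s r f))) s)
    -- the uniform bounds `a₁` and `a₂`
    (a₁ a₂ : ℝ)
    (ha₁ : ∀ i t r, t ≤ r → ‖U i t r‖ ≤ a₁)
    (ha₂ : ∀ t r, t ≤ r → ‖V t r‖ ≤ a₂)
    {t r : ℝ} (htr : t ≤ r)
    -- any uniform bound on the difference of the generators on `[t, r]`
    (c : ℝ) (hc : ∀ s ∈ Set.Icc t r, ‖L 1 s - L 0 s‖ ≤ c)
    (f : D) :
    ‖U 1 t r (j f) - U 0 t r (j f)‖ ≤ a₁ * a₂ * (r - t) * c * ‖f‖ := by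
  classical
  have ha₁0 : 0 ≤ a₁ := le_trans (norm_nonneg _) (ha₁ 0 t r htr)
  have ha₂0 : 0 ≤ a₂ := le_trans (norm_nonneg _) (ha₂ t r htr)
  have hc0 : 0 ≤ c := le_trans (norm_nonneg _) (hc t ⟨le_rfl, htr⟩)
  set y : ℝ → B := fun s => U 0 s r (j f) with hy
  set φ : ℝ → B := fun s => U 1 t s (y s) with hφ
  have hyj : ∀ s, y s = j (V s r f) := fun s => (hV s r f).symm
  have hy_deriv : ∀ s ∈ Icc t r, HasDerivAt y (-(L 0 s (V s r f))) s :=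
    fun s hs => hgen_bwd t r f s hs
  set φ' : ℝ → B := fun s => U 1 t s ((L 1 s - L 0 s) (V s r f)) with hφ'
  set C : ℝ := a₁ * (c * (a₂ * ‖f‖)) with hC
  -- norm bound on the candidate derivative
  have hbound : ∀ s ∈ Ico t r, ‖φ' s‖ ≤ C := by
    intro s hs
    have h1 : ‖φ' s‖ ≤ ‖U 1 t s‖ * ‖(L 1 s - L 0 s) (V s r f)‖ :=
      (U 1 t s).le_opNorm _
    have h2 : ‖(L 1 s - L 0 s) (V s r f)‖ ≤ ‖L 1 s - L 0 s‖ * ‖V s r f‖ :=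
      (L 1 s - L 0 s).le_opNorm _
    have h3 : ‖V s r f‖ ≤ ‖V s r‖ * ‖f‖ := (V s r).le_opNorm f
    have h4 : ‖V s r‖ ≤ a₂ := ha₂ s r hs.2.le
    have h5 : ‖L 1 s - L 0 s‖ ≤ c := hc s ⟨hs.1, hs.2.le⟩
    have h6 : ‖U 1 t s‖ ≤ a₁ := ha₁ 1 t s hs.1
    have h7 : ‖V s r f‖ ≤ a₂ * ‖f‖ :=
      h3.trans (mul_le_mul_of_nonneg_right h4 (norm_nonneg f))
    have h8 : ‖(L 1 s - L 0 s) (V s r f)‖ ≤ c * (a₂ * ‖f‖) :=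
      h2.trans (mul_le_mul h5 h7 (norm_nonneg _) hc0)
    calc ‖φ' s‖ ≤ ‖U 1 t s‖ * ‖(L 1 s - L 0 s) (V s r f)‖ := h1
      _ ≤ a₁ * (c * (a₂ * ‖f‖)) := mul_le_mul h6 h8 (norm_nonneg _) ha₁0
  -- the right derivative of φ
  have hderiv : ∀ s₀ ∈ Ico t r, HasDerivWithinAt φ (φ' s₀) (Ici s₀) s₀ := by
    intro s₀ hs₀
    obtain ⟨hts₀, hs₀r⟩ := hs₀
    set g₀ : D := V s₀ r f with hg₀
    set v : B := -(L 0 s₀ g₀) with hv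
    have hyd : HasDerivAt y v s₀ := hgen_bwd t r f s₀ ⟨hts₀, hs₀r.le⟩
    -- v is in the closure of the range of j
    have hvmem : v ∈ closure (Set.range (j : D → B)) := by
      have hslope := hasDerivAt_iff_tendsto_slope.1 hyd
      refine mem_closure_of_tendsto hslope ?_
      filter_upwards with s
      refine ⟨(s - s₀)⁻¹ • (V s r f - V s₀ r f), ?_⟩
      simp [slope_def_module, hyj, map_smul, map_sub]
    -- strong continuity of U 1 s₀ · at v, from the right
    have hcont_v : Tendsto (fun s => U 1 s₀ s v - v) (𝓝[≥] s₀) (𝓝 0) := by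
      rw [NormedAddCommGroup.tendsto_nhds_zero]
      intro ε hε
      set δ : ℝ := ε / (3 * (a₁ + 1)) with hδ
      have hδpos : 0 < δ := by positivity
      obtain ⟨w, ⟨h, rfl⟩, hw⟩ : ∃ w ∈ Set.range (j : D → B), dist v w < δ :=
        Metric.mem_closure_iff.1 hvmem δ hδpos
      have hcont : ContinuousAt (fun s => U 1 s₀ s (j h)) s₀ :=
        (hgen_fwd 1 s₀ s₀ h s₀ ⟨le_rfl, le_rfl⟩).continuousAt
      have hval : U 1 s₀ s₀ (j h) = j h := by rw [hUid]; rfl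
      have hev : ∀ᶠ s in 𝓝 s₀, ‖U 1 s₀ s (j h) - j h‖ < δ := by
        have h0 : Tendsto (fun s => U 1 s₀ s (j h) - j h) (𝓝 s₀) (𝓝 0) := by
          have := hcont.tendsto
          rw [hval] at this
          simpa using this.sub_const (j h)
        exact (NormedAddCommGroup.tendsto_nhds_zero.1 h0) δ hδpos
      filter_upwards [hev.filter_mono nhdsWithin_le_nhds, self_mem_nhdsWithin] with s h1 h2
      have hs₀s : s₀ ≤ s := h2
      have hnorm : ‖U 1 s₀ s‖ ≤ a₁ := ha₁ 1 s₀ s hs₀s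
      have hvw : ‖v - j h‖ < δ := by rwa [← dist_eq_norm]
      have key : U 1 s₀ s v - v =
          U 1 s₀ s (v - j h) + (U 1 s₀ s (j h) - j h) + (j h - v) := by
        simp only [map_sub]; abel
      rw [key]
      have b1 : ‖U 1 s₀ s (v - j h)‖ ≤ a₁ * δ := by
        calc ‖U 1 s₀ s (v - j h)‖ ≤ ‖U 1 s₀ s‖ * ‖v - j h‖ := (U 1 s₀ s).le_opNorm _
          _ ≤ a₁ * δ := mul_le_mul hnorm hvw.le (norm_nonneg _) ha₁0
      have b3 : ‖j h - v‖ < δ := by rwa [norm_sub_rev]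
      calc ‖U 1 s₀ s (v - j h) + (U 1 s₀ s (j h) - j h) + (j h - v)‖
          ≤ ‖U 1 s₀ s (v - j h)‖ + ‖U 1 s₀ s (j h) - j h‖ + ‖j h - v‖ := norm_add₃_le
        _ < ε := by
            have heq : 3 * (a₁ + 1) * δ = ε := by
              rw [hδ]; field_simp
            nlinarith [b1, h1, b3, hδpos, ha₁0]
    -- derivative of the "frozen" part
    have hψ : HasDerivAt (fun s => U 1 s₀ s (y s₀)) (L 1 s₀ g₀) s₀ := by
      have := hgen_fwd 1 s₀ r g₀ s₀ ⟨le_rfl, hs₀r.le⟩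
      rw [hUid] at this
      simpa [hyj s₀] using this
    -- the inner function η s = U 1 s₀ s (y s) has right derivative d = L 1 s₀ g₀ + v
    set d : B := L 1 s₀ g₀ + v with hd
    have hη : HasDerivWithinAt (fun s => U 1 s₀ s (y s)) d (Ici s₀) s₀ := by
      rw [hasDerivWithinAt_iff_isLittleO]
      have hA : (fun s => U 1 s₀ s (y s - y s₀ - (s - s₀) • v)) =o[𝓝[≥] s₀]
          fun s => s - s₀ := by
        have h1 : (fun s => y s - y s₀ - (s - s₀) • v) =o[𝓝[≥] s₀] fun s => s - s₀ :=
          (hasDerivAt_iff_isLittleO.1 hyd).mono nhdsWithin_le_nhds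
        refine (IsBigO.trans_isLittleO ?_ h1)
        refine isBigO_iff.2 ⟨a₁, ?_⟩
        filter_upwards [self_mem_nhdsWithin] with s hs
        calc ‖U 1 s₀ s (y s - y s₀ - (s - s₀) • v)‖
            ≤ ‖U 1 s₀ s‖ * ‖y s - y s₀ - (s - s₀) • v‖ := (U 1 s₀ s).le_opNorm _
          _ ≤ a₁ * ‖y s - y s₀ - (s - s₀) • v‖ :=
              mul_le_mul_of_nonneg_right (ha₁ 1 s₀ s hs) (norm_nonneg _)
      have hB : (fun s => (s - s₀) • (U 1 s₀ s v - v)) =o[𝓝[≥] s₀]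
          fun s => s - s₀ := by
        rw [isLittleO_iff]
        intro ε hε
        filter_upwards [(NormedAddCommGroup.tendsto_nhds_zero.1 hcont_v) ε hε] with s hs
        rw [norm_smul]
        calc ‖s - s₀‖ * ‖U 1 s₀ s v - v‖ ≤ ‖s - s₀‖ * ε :=
              mul_le_mul_of_nonneg_left hs.le (norm_nonneg _)
          _ = ε * ‖s - s₀‖ := mul_comm _ _
      have hG : (fun s => U 1 s₀ s (y s₀) - U 1 s₀ s₀ (y s₀) - (s - s₀) • (L 1 s₀ g₀))
          =o[𝓝[≥] s₀] fun s => s - s₀ :=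
        (hasDerivAt_iff_isLittleO.1 hψ).mono nhdsWithin_le_nhds
      have hsum := (hA.add hB).add hG
      refine hsum.congr' ?_ (EventuallyEq.refl _ _)
      filter_upwards with s
      rw [map_sub (U 1 s₀ s), map_sub (U 1 s₀ s), map_smul, hd]
      module
    -- now compose with the constant operator U 1 t s₀
    have hφη : ∀ s ∈ Ici s₀, φ s = U 1 t s₀ (U 1 s₀ s (y s)) := by
      intro s hs
      rw [hφ]
      simp only
      rw [← hUchain 1 t s₀ s hts₀ hs]
      rfl
    have hcomp : HasDerivWithinAt (fun s => U 1 t s₀ (U 1 s₀ s (y s)))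
        (U 1 t s₀ d) (Ici s₀) s₀ := (U 1 t s₀).hasFDerivAt.comp_hasDerivWithinAt s₀ hη
    have := hcomp.congr hφη (hφη s₀ (mem_Ici.2 le_rfl))
    have hdeq : U 1 t s₀ d = φ' s₀ := by
      rw [hφ', hd, hv, hg₀]
      congr 1
      simp [ContinuousLinearMap.sub_apply, sub_eq_add_neg]
    rwa [hdeq] at this
  -- continuity of φ on [t, r]
  have hycont : ContinuousOn y (Icc t r) := fun s hs =>
    (hy_deriv s hs).continuousAt.continuousWithinAt
  have hφcont : ContinuousOn φ (Icc t r) := by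
    intro s₀ hs₀
    have hright : ContinuousWithinAt φ (Icc s₀ r) s₀ := by
      rcases eq_or_lt_of_le hs₀.2 with h | h
      · rw [h, Icc_self]; exact continuousWithinAt_singleton
      · exact ((hderiv s₀ ⟨hs₀.1, h⟩).continuousWithinAt).mono fun x hx => hx.1
    have hleft : ContinuousWithinAt φ (Icc t s₀) s₀ := by
      set g : D := V s₀ r f with hg
      obtain ⟨K, hK⟩ : ∃ K, ∀ σ ∈ Icc t r, ‖L 1 σ g‖ ≤ K :=
        isCompact_Icc.exists_bound_of_continuousOn (hLcont 1 g).continuousOn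
      -- local MVT bound for ‖U 1 s s₀ (j g) - j g‖
      have hloc : ∀ s ∈ Icc t s₀, ‖U 1 s s₀ (j g) - j g‖ ≤ a₁ * K * ‖s₀ - s‖ := by
        intro s hs
        have hss₀ : s ≤ s₀ := hs.2
        have hder : ∀ σ ∈ Icc s s₀,
            HasDerivWithinAt (fun σ => U 1 s σ (j g)) (U 1 s σ (L 1 σ g)) (Icc s s₀) σ :=
          fun σ hσ => (hgen_fwd 1 s s₀ g σ hσ).hasDerivWithinAt
        have hbd : ∀ σ ∈ Icc s s₀, ‖U 1 s σ (L 1 σ g)‖ ≤ a₁ * K := by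
          intro σ hσ
          have hσtr : σ ∈ Icc t r := ⟨hs.1.trans hσ.1, hσ.2.trans hs₀.2⟩
          calc ‖U 1 s σ (L 1 σ g)‖ ≤ ‖U 1 s σ‖ * ‖L 1 σ g‖ := (U 1 s σ).le_opNorm _
            _ ≤ a₁ * K := mul_le_mul (ha₁ 1 s σ hσ.1) (hK σ hσtr) (norm_nonneg _) ha₁0
        have := Convex.norm_image_sub_le_of_norm_hasDerivWithin_le hder hbd
          (convex_Icc s s₀) (left_mem_Icc.2 hss₀) (right_mem_Icc.2 hss₀)
        calc ‖U 1 s s₀ (j g) - j g‖ = ‖U 1 s s₀ (j g) - U 1 s s (j g)‖ := by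
              rw [hUid]; rfl
          _ ≤ a₁ * K * ‖s₀ - s‖ := this
      -- bound ‖φ s - φ s₀‖ for s ∈ [t, s₀]
      have hkey : ∀ s ∈ Icc t s₀, ‖φ s - φ s₀‖ ≤
          a₁ * (a₁ * K * ‖s₀ - s‖ + ‖y s₀ - y s‖) := by
        intro s hs
        have hss₀ : s ≤ s₀ := hs.2
        have hchain : φ s₀ = U 1 t s (U 1 s s₀ (y s₀)) := by
          rw [hφ]; simp only
          rw [← hUchain 1 t s s₀ hs.1 hss₀]; rfl
        have : φ s - φ s₀ = U 1 t s (y s - U 1 s s₀ (y s₀)) := by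
          rw [hchain, hφ]; simp only [map_sub]
        rw [this]
        have h1 : ‖U 1 t s (y s - U 1 s s₀ (y s₀))‖ ≤ a₁ * ‖y s - U 1 s s₀ (y s₀)‖ := by
          calc ‖U 1 t s (y s - U 1 s s₀ (y s₀))‖
              ≤ ‖U 1 t s‖ * ‖y s - U 1 s s₀ (y s₀)‖ := (U 1 t s).le_opNorm _
            _ ≤ a₁ * ‖y s - U 1 s s₀ (y s₀)‖ :=
                mul_le_mul_of_nonneg_right (ha₁ 1 t s hs.1) (norm_nonneg _)
        refine h1.trans (mul_le_mul_of_nonneg_left ?_ ha₁0)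
        have h2 : y s - U 1 s s₀ (y s₀) = -((U 1 s s₀ (j g) - j g) + (y s₀ - y s)) := by
          rw [hyj s₀, ← hg]; abel
        rw [h2, norm_neg]
        calc ‖(U 1 s s₀ (j g) - j g) + (y s₀ - y s)‖
            ≤ ‖U 1 s s₀ (j g) - j g‖ + ‖y s₀ - y s‖ := norm_add_le _ _
          _ ≤ a₁ * K * ‖s₀ - s‖ + ‖y s₀ - y s‖ := add_le_add (hloc s hs) le_rfl
      -- squeeze
      have hb : Tendsto (fun s => a₁ * (a₁ * K * ‖s₀ - s‖ + ‖y s₀ - y s‖))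
          (𝓝[Icc t s₀] s₀) (𝓝 0) := by
        have hy0 : Tendsto (fun s => ‖y s₀ - y s‖) (𝓝[Icc t s₀] s₀) (𝓝 0) := by
          have h1 : ContinuousWithinAt y (Icc t s₀) s₀ :=
            (hycont s₀ hs₀).mono (Icc_subset_Icc le_rfl hs₀.2)
          have h2 : Tendsto (fun s => y s₀ - y s) (𝓝[Icc t s₀] s₀) (𝓝 (y s₀ - y s₀)) :=
            tendsto_const_nhds.sub h1
          rw [sub_self] at h2
          simpa using h2.norm
        have hn : Tendsto (fun s => ‖s₀ - s‖) (𝓝[Icc t s₀] s₀) (𝓝 0) := by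
          have h1 : Tendsto (fun s : ℝ => s₀ - s) (𝓝 s₀) (𝓝 (s₀ - s₀)) :=
            tendsto_const_nhds.sub tendsto_id
          rw [sub_self] at h1
          simpa using (h1.mono_left nhdsWithin_le_nhds).norm
        have h3 := ((hn.const_mul (a₁ * K)).add hy0).const_mul a₁
        rw [mul_zero, add_zero, mul_zero] at h3
        exact h3
      have hsq : Tendsto (fun s => φ s - φ s₀) (𝓝[Icc t s₀] s₀) (𝓝 0) := by
        refine squeeze_zero_norm' ?_ hb
        filter_upwards [self_mem_nhdsWithin] with s hs using hkey s hs
      have := hsq.add_const (φ s₀)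
      have h' : Tendsto φ (𝓝[Icc t s₀] s₀) (𝓝 (φ s₀)) := by simpa using this
      exact h'
    exact ((hleft.union hright).mono (fun s hs => by
      rcases le_total s s₀ with h | h
      · exact Or.inl ⟨hs.1, h⟩
      · exact Or.inr ⟨h, hs.2⟩))
  -- apply the mean value inequality
  have hmvt := norm_image_sub_le_of_norm_deriv_right_le_segment hφcont hderiv hbound r
    (right_mem_Icc.2 htr)
  have hφr : φ r = U 1 t r (j f) := by
    rw [hφ]; simp only [hy]
    rw [hUid 0 r]; rfl
  have hφt : φ t = U 0 t r (j f) := by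
    rw [hφ]; simp only
    rw [hUid 1 t]; rfl
  rw [hφr, hφt] at hmvt
  calc ‖U 1 t r (j f) - U 0 t r (j f)‖ ≤ C * (r - t) := hmvt
    _ = a₁ * a₂ * (r - t) * c * ‖f‖ := by rw [hC]; ring
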